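/- Fix a with 0 < a < π/2. The function g(x) = arccos(cos(a)² + sin(a)²·cos(x)) is strictly concave on (0, π), and its second derivative equals −4·sin(a)⁴·cos(a)²·sin(x/2)⁴ / (1 − (cos(a)² + sin(a)²·cos(x))²)^(3/2) there. -/

import Mathlib

open Real Set

private lemma first_deriv (a x : ℝ)
    (h1 : -1 < Real.cos a ^ 2 + Real.sin a ^ 2 * Real.cos x)
    (h2 : Real.cos a ^ 2 + Real.sin a ^ 2 * Real.cos x < 1) :
    HasDerivAt (fun x : ℝ => Real.arccos (Real.cos a ^ 2 + Real.sin a ^ 2 * Real.cos x))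
      (Real.sin a ^ 2 * Real.sin x /
        Real.sqrt (1 - (Real.cos a ^ 2 + Real.sin a ^ 2 * Real.cos x) ^ 2)) x := by
  have hu : HasDerivAt (fun x : ℝ => Real.cos a ^ 2 + Real.sin a ^ 2 * Real.cos x)
      (Real.sin a ^ 2 * (-Real.sin x)) x :=
    ((Real.hasDerivAt_cos x).const_mul _).const_add _
  have := (Real.hasDerivAt_arccos h1.ne' h2.ne).comp x hu
  refine this.congr_deriv ?_
  ring

private lemma second_deriv (a x : ℝ)
    (h1 : -1 < Real.cos a ^ 2 + Real.sin a ^ 2 * Real.cos x)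
    (h2 : Real.cos a ^ 2 + Real.sin a ^ 2 * Real.cos x < 1) :
    HasDerivAt (fun x : ℝ => Real.sin a ^ 2 * Real.sin x /
        Real.sqrt (1 - (Real.cos a ^ 2 + Real.sin a ^ 2 * Real.cos x) ^ 2))
      ((Real.sin a ^ 2 * Real.cos x *
          Real.sqrt (1 - (Real.cos a ^ 2 + Real.sin a ^ 2 * Real.cos x) ^ 2) -
        Real.sin a ^ 2 * Real.sin x *
          (1 / (2 * Real.sqrt (1 - (Real.cos a ^ 2 + Real.sin a ^ 2 * Real.cos x) ^ 2)) *
            -(2 * (Real.cos a ^ 2 + Real.sin a ^ 2 * Real.cos x) * (Real.sin a ^ 2 * (-Real.sin x))))) /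
        Real.sqrt (1 - (Real.cos a ^ 2 + Real.sin a ^ 2 * Real.cos x) ^ 2) ^ 2) x := by
  set u := Real.cos a ^ 2 + Real.sin a ^ 2 * Real.cos x with hu_def
  have hpos : 0 < 1 - u ^ 2 := by nlinarith
  have hu : HasDerivAt (fun x : ℝ => Real.cos a ^ 2 + Real.sin a ^ 2 * Real.cos x)
      (Real.sin a ^ 2 * (-Real.sin x)) x :=
    ((Real.hasDerivAt_cos x).const_mul _).const_add _
  have hinner : HasDerivAt (fun x : ℝ => 1 - (Real.cos a ^ 2 + Real.sin a ^ 2 * Real.cos x) ^ 2)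
      (-(2 * u * (Real.sin a ^ 2 * (-Real.sin x)))) x := by
    have := (hu.pow 2).const_sub 1
    refine this.congr_deriv ?_
    simp only [← hu_def]
    ring
  have hq : HasDerivAt (fun x : ℝ =>
      Real.sqrt (1 - (Real.cos a ^ 2 + Real.sin a ^ 2 * Real.cos x) ^ 2))
      (1 / (2 * Real.sqrt (1 - u ^ 2)) *
        -(2 * u * (Real.sin a ^ 2 * (-Real.sin x)))) x :=
    (Real.hasDerivAt_sqrt hpos.ne').comp x hinner
  have hnum : HasDerivAt (fun x : ℝ => Real.sin a ^ 2 * Real.sin x)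
      (Real.sin a ^ 2 * Real.cos x) x := (Real.hasDerivAt_sin x).const_mul _
  exact hnum.div hq (by positivity)

theorem stmt_13 (a : ℝ) (ha0 : 0 < a) (ha : a < Real.pi / 2) :
    StrictConcaveOn ℝ (Set.Ioo 0 Real.pi)
      (fun x : ℝ => Real.arccos (Real.cos a ^ 2 + Real.sin a ^ 2 * Real.cos x)) ∧
    ∀ x ∈ Set.Ioo 0 Real.pi,
      deriv (deriv (fun x : ℝ => Real.arccos (Real.cos a ^ 2 + Real.sin a ^ 2 * Real.cos x))) x
        = -(4 * Real.sin a ^ 4 * Real.cos a ^ 2 * Real.sin (x / 2) ^ 4) /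
            ((1 - (Real.cos a ^ 2 + Real.sin a ^ 2 * Real.cos x) ^ 2) ^ ((3 : ℝ) / 2)) := by
  have hpi := Real.pi_pos
  have hsa : 0 < Real.sin a := Real.sin_pos_of_pos_of_lt_pi ha0 (by linarith)
  have hca : 0 < Real.cos a := Real.cos_pos_of_mem_Ioo ⟨by linarith, ha⟩
  have hsc := Real.sin_sq_add_cos_sq a
  -- bounds on u for x in Ioo 0 π
  have hbound : ∀ x ∈ Set.Ioo (0:ℝ) Real.pi,
      -1 < Real.cos a ^ 2 + Real.sin a ^ 2 * Real.cos x ∧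
      Real.cos a ^ 2 + Real.sin a ^ 2 * Real.cos x < 1 := by
    intro x hx
    have hcx1 : Real.cos x < 1 := by
      have := Real.cos_lt_cos_of_nonneg_of_le_pi le_rfl hx.2.le hx.1
      simpa using this
    have hcx2 : -1 < Real.cos x := by
      have := Real.cos_lt_cos_of_nonneg_of_le_pi hx.1.le le_rfl hx.2
      simpa using this
    constructor
    · nlinarith [mul_pos (pow_pos hsa 2) (by linarith : (0:ℝ) < Real.cos x + 1), pow_pos hca 2]
    · nlinarith [mul_pos (pow_pos hsa 2) (by linarith : (0:ℝ) < 1 - Real.cos x)]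
  -- the key formula
  have key : ∀ x ∈ Set.Ioo (0:ℝ) Real.pi,
      deriv (deriv (fun x : ℝ => Real.arccos (Real.cos a ^ 2 + Real.sin a ^ 2 * Real.cos x))) x
        = -(4 * Real.sin a ^ 4 * Real.cos a ^ 2 * Real.sin (x / 2) ^ 4) /
            ((1 - (Real.cos a ^ 2 + Real.sin a ^ 2 * Real.cos x) ^ 2) ^ ((3 : ℝ) / 2)) := by
    intro x hx
    obtain ⟨h1, h2⟩ := hbound x hx
    -- first: deriv g agrees with g1 near x
    have hev : deriv (fun x : ℝ => Real.arccos (Real.cos a ^ 2 + Real.sin a ^ 2 * Real.cos x))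
        =ᶠ[nhds x] (fun x : ℝ => Real.sin a ^ 2 * Real.sin x /
          Real.sqrt (1 - (Real.cos a ^ 2 + Real.sin a ^ 2 * Real.cos x) ^ 2)) := by
      filter_upwards [Ioo_mem_nhds hx.1 hx.2] with y hy
      obtain ⟨hy1, hy2⟩ := hbound y hy
      exact (first_deriv a y hy1 hy2).deriv
    rw [Filter.EventuallyEq.deriv_eq hev, (second_deriv a x h1 h2).deriv]
    -- algebraic identity
    set u := Real.cos a ^ 2 + Real.sin a ^ 2 * Real.cos x with hu_def
    have hpos : 0 < 1 - u ^ 2 := by nlinarith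
    set q := Real.sqrt (1 - u ^ 2) with hq_def
    have hqpos : 0 < q := Real.sqrt_pos.2 hpos
    have hq2 : q ^ 2 = 1 - u ^ 2 := Real.sq_sqrt hpos.le
    have h32 : (1 - u ^ 2) ^ ((3:ℝ)/2) = q ^ 3 := by
      rw [show ((3:ℝ)/2) = (1/2) * 3 by norm_num, Real.rpow_mul hpos.le,
        ← Real.sqrt_eq_rpow, ← hq_def,
        show ((3:ℝ)) = ((3:ℕ):ℝ) by norm_num, Real.rpow_natCast]
    rw [h32]
    have hhalf : Real.sin (x/2) ^ 2 = (1 - Real.cos x) / 2 := by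
      have h := Real.cos_two_mul (x/2)
      have h2 := Real.sin_sq_add_cos_sq (x/2)
      rw [show 2*(x/2) = x by ring] at h
      linarith
    have hsx := Real.sin_sq_add_cos_sq x
    field_simp
    linear_combination Real.cos x * hq2 +
      (4 * Real.sin a ^ 2 * Real.cos a ^ 2 * (Real.sin (x / 2) ^ 2 + (1 - Real.cos x) / 2)) * hhalf -
      (Real.sin a ^ 2 * u) * hsx -
      (Real.cos x * (Real.sin a ^ 2 + Real.cos a ^ 2 + 1)) * hsc +
      (-Real.cos x * (u + (Real.cos a ^ 2 + Real.sin a ^ 2 * Real.cos x)) -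
        Real.sin a ^ 2 * (1 - Real.cos x ^ 2)) * hu_def
  refine ⟨?_, key⟩
  apply strictConcaveOn_of_deriv2_neg (convex_Ioo _ _)
  · exact (Real.continuous_arccos.comp (by continuity)).continuousOn
  · intro x hx
    rw [interior_Ioo] at hx
    have := key x hx
    have hiter : deriv^[2] (fun x : ℝ => Real.arccos (Real.cos a ^ 2 + Real.sin a ^ 2 * Real.cos x)) x
        = deriv (deriv (fun x : ℝ => Real.arccos (Real.cos a ^ 2 + Real.sin a ^ 2 * Real.cos x))) x := rfl
    rw [hiter, this]
    obtain ⟨h1, h2⟩ := hbound x hx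
    have hpos : 0 < 1 - (Real.cos a ^ 2 + Real.sin a ^ 2 * Real.cos x) ^ 2 := by nlinarith
    have hsh : 0 < Real.sin (x/2) :=
      Real.sin_pos_of_pos_of_lt_pi (by linarith [hx.1]) (by linarith [hx.2])
    apply div_neg_of_neg_of_pos
    · have : 0 < 4 * Real.sin a ^ 4 * Real.cos a ^ 2 * Real.sin (x / 2) ^ 4 := by positivity
      linarith
    · positivity
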